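/- If every state of tree automaton A = (Q, Σ, F, δ) is reachable and F ≠ ∅ and Σ contains at least one symbol of arity 0 (so that ground terms exist), then there exists a ground term t and a final state q ∈ F with t ⇝* q; moreover, if additionally the hypotheses of the weak-closure criterion hold for a left-linear TRS R (for all ℓ → r ∈ R, α : X → Q, q ∈ Q: ℓα ⇝* q implies tα ⇝* q for some t with ℓ →_R⁺ t) and L(A) contains no R-normal forms, then L(A) is infinite or some term of L(A) starts an infinite R-reduction. -/

import Mathlib

/-- Terms over a ranked signature `F` (with arity `ar`) and variables `V`.
States of a tree automaton are treated as extra constants, i.e. variables. -/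
inductive Tm (F : Type) (ar : F → ℕ) (V : Type) : Type
  | var : V → Tm F ar V
  | node : (f : F) → (Fin (ar f) → Tm F ar V) → Tm F ar V

namespace Tm

variable {F : Type} {ar : F → ℕ}

/-- Substitution. -/
def subst {V W : Type} (σ : V → Tm F ar W) : Tm F ar V → Tm F ar W
  | var x => σ x
  | node f ts => node f (fun i => (ts i).subst σ)

/-- The list of variable occurrences of a term. -/
def varsList {V : Type} : Tm F ar V → List V
  | var x => [x]
  | node f ts => (List.ofFn (fun i => (ts i).varsList)).flatten

/-- A term is linear if every variable occurs at most once. -/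
def Linear {V : Type} (t : Tm F ar V) : Prop := t.varsList.Nodup

/-- Subterm relation. -/
inductive Subtm {V : Type} : Tm F ar V → Tm F ar V → Prop
  | refl (t : Tm F ar V) : Subtm t t
  | child {s : Tm F ar V} {f : F} {ts : Fin (ar f) → Tm F ar V} (i : Fin (ar f)) :
      Subtm s (ts i) → Subtm s (node f ts)

end Tm

/-- Ground terms: terms without variables. -/
abbrev GTm (F : Type) (ar : F → ℕ) : Type := Tm F ar Empty

/-- A ground term viewed as a term over any variable type. -/
def GTm.toTm {F : Type} {ar : F → ℕ} {V : Type} (t : GTm F ar) : Tm F ar V :=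
  t.subst (fun e => e.elim)

/-- A (bottom-up, possibly non-deterministic) tree automaton:
final states and a transition relation `δ`. -/
structure Automaton (F : Type) (ar : F → ℕ) (Q : Type) where
  final : Set Q
  delta : (f : F) → (Fin (ar f) → Q) → Q → Prop

namespace Automaton

variable {F : Type} {ar : F → ℕ} {Q Q' : Type}

/-- One rewrite step `⇝` induced by an automaton on terms over `Σ ∪ Q`. -/
inductive Step (A : Automaton F ar Q) : Tm F ar Q → Tm F ar Q → Prop
  | base {f : F} {qs : Fin (ar f) → Q} {q : Q} :
      A.delta f qs q → Step A (.node f (fun i => .var (qs i))) (.var q)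
  | congr {f : F} {ts : Fin (ar f) → Tm F ar Q} {i : Fin (ar f)} {t' : Tm F ar Q} :
      Step A (ts i) t' → Step A (.node f ts) (.node f (Function.update ts i t'))

/-- The reduction relation `⇝*`. -/
def Steps (A : Automaton F ar Q) : Tm F ar Q → Tm F ar Q → Prop :=
  Relation.ReflTransGen (Step A)

/-- A state is reachable if some ground term reduces to it. -/
def Reachable (A : Automaton F ar Q) (q : Q) : Prop :=
  ∃ t : GTm F ar, A.Steps t.toTm (.var q)

/-- The language of the automaton. -/
def Lang (A : Automaton F ar Q) : Set (GTm F ar) :=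
  {t | ∃ q ∈ A.final, A.Steps t.toTm (.var q)}

/-- The product automaton. -/
def prod (A : Automaton F ar Q) (B : Automaton F ar Q') : Automaton F ar (Q × Q') where
  final := A.final ×ˢ B.final
  delta f qs q := A.delta f (fun i => (qs i).1) q.1 ∧ B.delta f (fun i => (qs i).2) q.2

/-- Determinism. -/
def Deterministic (A : Automaton F ar Q) : Prop :=
  ∀ (f : F) (qs : Fin (ar f) → Q) (q q' : Q), A.delta f qs q → A.delta f qs q' → q = q'

/-- Completeness. -/
def Complete (A : Automaton F ar Q) : Prop :=
  ∀ (f : F) (qs : Fin (ar f) → Q), ∃ q : Q, A.delta f qs q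

end Automaton

/-- A term rewriting system: a set of rules over variables `X`. -/
abbrev TRS (F : Type) (ar : F → ℕ) (X : Type) : Type := Set (Tm F ar X × Tm F ar X)

/-- A TRS is left-linear if no variable occurs twice in a left-hand side. -/
def LeftLinear {F : Type} {ar : F → ℕ} {X : Type} (R : TRS F ar X) : Prop :=
  ∀ p ∈ R, p.1.Linear

/-- One rewrite step `→_R` (on terms over any variable type `V`). -/
inductive RStep {F : Type} {ar : F → ℕ} {X V : Type} (R : TRS F ar X) :
    Tm F ar V → Tm F ar V → Prop
  | base {l r : Tm F ar X} {σ : X → Tm F ar V} :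
      (l, r) ∈ R → RStep R (l.subst σ) (r.subst σ)
  | congr {f : F} {ts : Fin (ar f) → Tm F ar V} {i : Fin (ar f)} {t' : Tm F ar V} :
      RStep R (ts i) t' → RStep R (.node f ts) (.node f (Function.update ts i t'))

/-- `t` is an `R`-normal form. -/
def IsNF {F : Type} {ar : F → ℕ} {X V : Type} (R : TRS F ar X) (t : Tm F ar V) : Prop :=
  ∀ t', ¬ RStep R t t'

section Aux

variable {F : Type} {ar : F → ℕ} {Q X : Type}

namespace Tm

lemma subst_subst {V W U : Type} (σ : V → Tm F ar W) (τ : W → Tm F ar U)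
    (t : Tm F ar V) : (t.subst σ).subst τ = t.subst (fun x => (σ x).subst τ) := by
  induction t with
  | var x => rfl
  | node f ts ih => simp only [subst]; exact congrArg _ (funext fun i => ih i)

lemma mem_varsList_node {V : Type} {f : F} {ts : Fin (ar f) → Tm F ar V}
    {x : V} {i : Fin (ar f)} (h : x ∈ (ts i).varsList) :
    x ∈ (node f ts).varsList := by
  simp only [varsList, List.mem_flatten]
  exact ⟨(ts i).varsList, by rw [List.mem_ofFn]; exact ⟨i, rfl⟩, h⟩

lemma subst_congr_vars {V W : Type} {σ σ' : V → Tm F ar W} :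
    ∀ {t : Tm F ar V}, (∀ x ∈ t.varsList, σ x = σ' x) → t.subst σ = t.subst σ' := by
  intro t
  induction t with
  | var x => intro h; exact h x (by simp [varsList])
  | node f ts ih =>
    intro h
    simp only [subst]
    exact congrArg _ (funext fun i => ih i (fun x hx => h x (mem_varsList_node hx)))

end Tm

lemma GTm.toTm_subst {V : Type} (l : Tm F ar X) (σ : X → GTm F ar) :
    (GTm.toTm (l.subst σ) : Tm F ar V) = l.subst (fun x => (σ x).toTm) :=
  Tm.subst_subst _ _ _

lemma GTm.toTm_node {V : Type} (f : F) (ts : Fin (ar f) → GTm F ar) :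
    (GTm.toTm (Tm.node f ts) : Tm F ar V) = .node f (fun i => (ts i).toTm) := rfl

namespace Automaton

lemma steps_var_eq {A : Automaton F ar Q} {q : Q} {t : Tm F ar Q}
    (h : A.Steps (.var q) t) : t = .var q := by
  induction h with
  | refl => rfl
  | tail h1 h2 ih => subst ih; cases h2

lemma steps_congr_one {A : Automaton F ar Q} :
    ∀ {s t' : Tm F ar Q}, A.Steps s t' → ∀ {f : F} (ts : Fin (ar f) → Tm F ar Q)
    (i : Fin (ar f)), ts i = s → A.Steps (.node f ts) (.node f (Function.update ts i t')) := by
  intro s t' h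
  induction h using Relation.ReflTransGen.head_induction_on with
  | refl =>
    intro f ts i hi
    rw [← hi, Function.update_eq_self]
    exact Relation.ReflTransGen.refl
  | head h' hrest ih =>
    intro f ts i hi
    refine Relation.ReflTransGen.head (Automaton.Step.congr (i := i) (by rw [hi]; exact h')) ?_
    have := ih (f := f) (Function.update ts i _) i (Function.update_self _ _ _)
    rwa [Function.update_idem] at this

lemma steps_node {A : Automaton F ar Q} {f : F} {ts ts' : Fin (ar f) → Tm F ar Q}
    (h : ∀ i, A.Steps (ts i) (ts' i)) :
    A.Steps (.node f ts) (.node f ts') := by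
  classical
  have key : ∀ l : List (Fin (ar f)),
      A.Steps (.node f ts) (.node f (fun i => if i ∈ l then ts' i else ts i)) := by
    intro l
    induction l with
    | nil => exact Relation.ReflTransGen.refl
    | cons a l ih =>
      refine Relation.ReflTransGen.trans ih ?_
      have h2 : A.Steps ((fun i => if i ∈ l then ts' i else ts i) a) (ts' a) := by
        by_cases ha : a ∈ l
        · simp only [if_pos ha]; exact Relation.ReflTransGen.refl
        · simp only [if_neg ha]; exact h a
      have h3 := steps_congr_one h2 (fun i => if i ∈ l then ts' i else ts i) a rfl
      have heq : Function.update (fun i => if i ∈ l then ts' i else ts i) a (ts' a)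
          = (fun i => if i ∈ a :: l then ts' i else ts i) := by
        funext j
        by_cases hj : j = a
        · subst hj; simp
        · simp [Function.update_of_ne hj, hj]
      rwa [heq] at h3
  have h4 := key (List.finRange (ar f))
  simpa [List.mem_finRange] using h4

lemma steps_node_inv {A : Automaton F ar Q} :
    ∀ {s : Tm F ar Q} {q : Q}, A.Steps s (.var q) →
    ∀ {f : F} {ts : Fin (ar f) → Tm F ar Q}, s = .node f ts →
    ∃ qs : Fin (ar f) → Q, A.delta f qs q ∧ ∀ i, A.Steps (ts i) (.var (qs i)) := by
  intro s q h
  induction h using Relation.ReflTransGen.head_induction_on with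
  | refl => intro f ts h; cases h
  | head h' hrest ih =>
    intro f ts heq
    subst heq
    cases h' with
    | @base f2 qs2 q2 hdelta =>
      have hq := steps_var_eq hrest
      obtain rfl : q = q2 := by injection hq
      exact ⟨qs2, hdelta, fun i => Relation.ReflTransGen.refl⟩
    | @congr f2 ts2 i t' hstep =>
      obtain ⟨qs, hdelta, hsteps⟩ := ih rfl
      refine ⟨qs, hdelta, fun j => ?_⟩
      by_cases hj : j = i
      · subst hj
        have h5 := hsteps j
        rw [Function.update_self] at h5
        exact Relation.ReflTransGen.head hstep h5
      · have h5 := hsteps j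
        rwa [Function.update_of_ne hj] at h5

end Automaton

end Aux
section Aux2

variable {F : Type} {ar : F → ℕ} {Q X : Type}

open Automaton

lemma steps_subst_mono {A : Automaton F ar Q} {V : Type} {σ σ' : V → Tm F ar Q} :
    ∀ {t : Tm F ar V}, (∀ x ∈ t.varsList, A.Steps (σ x) (σ' x)) →
    A.Steps (t.subst σ) (t.subst σ') := by
  intro t
  induction t with
  | var x => intro h; exact h x (by simp [Tm.varsList])
  | node f ts ih =>
    intro h
    exact steps_node (fun i => ih i (fun x hx => h x (Tm.mem_varsList_node hx)))

lemma accept_subst_decomp [Nonempty Q] {A : Automaton F ar Q} :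
    ∀ (l : Tm F ar X), l.Linear → ∀ (σ : X → Tm F ar Q) (q : Q),
    A.Steps (l.subst σ) (.var q) →
    ∃ α : X → Q, A.Steps (l.subst (fun x => .var (α x))) (.var q) ∧
      ∀ x ∈ l.varsList, A.Steps (σ x) (.var (α x)) := by
  intro l
  induction l with
  | var x =>
    intro _ σ q h
    refine ⟨fun _ => q, Relation.ReflTransGen.refl, ?_⟩
    intro y hy
    simp [Tm.varsList] at hy
    subst hy
    exact h
  | node f ts ih =>
    intro hlin σ q h
    obtain ⟨qs, hdelta, hsteps⟩ := steps_node_inv h rfl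
    have hlin' : ∀ i, (ts i).Linear ∧
        List.Pairwise List.Disjoint (List.ofFn (fun i => (ts i).varsList)) := by
      have := hlin
      unfold Tm.Linear Tm.varsList at this
      rw [List.nodup_flatten] at this
      exact fun i => ⟨this.1 _ (by rw [List.mem_ofFn]; exact ⟨i, rfl⟩), this.2⟩
    have hdisj : ∀ i j : Fin (ar f), i ≠ j →
        List.Disjoint ((ts i).varsList) ((ts j).varsList) := by
      intro i j hij
      rcases lt_or_gt_of_ne hij with h' | h'
      · exact List.pairwise_ofFn.mp (hlin' i).2 h'
      · exact ((List.pairwise_ofFn.mp (hlin' i).2 h')).symm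
    choose αs h1 h2 using fun i => ih i (hlin' i).1 σ (qs i) (hsteps i)
    classical
    let α : X → Q := fun x => if hx : ∃ i, x ∈ (ts i).varsList then αs hx.choose x
      else Classical.arbitrary Q
    have hα : ∀ x, α x = if hx : ∃ i, x ∈ (ts i).varsList then αs hx.choose x
      else Classical.arbitrary Q := fun _ => rfl
    have key : ∀ i x, x ∈ (ts i).varsList → α x = αs i x := by
      intro i x hx
      have hex : ∃ j, x ∈ (ts j).varsList := ⟨i, hx⟩
      rw [hα, dif_pos hex]
      by_cases hji : hex.choose = i
      · rw [hji]
      · exact absurd hx (hdisj _ _ hji hex.choose_spec)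
    refine ⟨α, ?_, ?_⟩
    · refine Relation.ReflTransGen.tail (steps_node (ts' := fun i => .var (qs i))
        (fun i => ?_)) (Automaton.Step.base hdelta)
      have heq : (ts i).subst (fun x => Tm.var (α x)) = (ts i).subst (fun x => Tm.var (αs i x)) := by
        apply Tm.subst_congr_vars
        intro x hx
        rw [key i x hx]
      rw [show Tm.subst (fun x => Tm.var (α x)) (ts i) = (ts i).subst (fun x => Tm.var (α x)) from rfl, heq]
      exact h1 i
    · intro x hx
      simp only [Tm.varsList, List.mem_flatten] at hx
      obtain ⟨lx, hlx, hxlx⟩ := hx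
      rw [List.mem_ofFn] at hlx
      obtain ⟨i, rfl⟩ := hlx
      rw [show ∀ y : Q, A.Steps (σ x) (Tm.var y) = A.Steps (σ x) (Tm.var y) from fun _ => rfl]
      have : α x = αs i x := key i x hxlx
      show A.Steps (σ x) (Tm.var (α x))
      rw [this]
      exact h2 i x hxlx

lemma RStep.subst_lift {V W : Type} {R : TRS F ar X} {σ : V → Tm F ar W} :
    ∀ {s t : Tm F ar V}, RStep R s t → RStep R (s.subst σ) (t.subst σ) := by
  intro s t h
  induction h with
  | base hmem =>
    rename_i l r τ
    rw [Tm.subst_subst, Tm.subst_subst]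
    exact RStep.base hmem
  | congr hstep ih =>
    rename_i f ts i t' 
    have heq : (fun j => ((Function.update ts i t') j).subst σ)
        = Function.update (fun j => (ts j).subst σ) i (t'.subst σ) := by
      funext j
      by_cases hj : j = i
      · subst hj; simp
      · simp [Function.update_of_ne hj]
    show RStep R (.node f fun j => (ts j).subst σ) (.node f fun j => ((Function.update ts i t') j).subst σ)
    rw [heq]
    exact RStep.congr ih

lemma transGen_rstep_congr {V : Type} {R : TRS F ar X} :
    ∀ {s t : Tm F ar V}, Relation.TransGen (RStep R) s t →
    ∀ {f : F} {ts : Fin (ar f) → Tm F ar V} (i : Fin (ar f)), ts i = s →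
    Relation.TransGen (RStep R) (.node f ts) (.node f (Function.update ts i t)) := by
  intro s t h
  induction h with
  | single h' =>
    intro f ts i hi
    exact Relation.TransGen.single (RStep.congr (by rw [hi]; exact h'))
  | tail h1 h2 ih =>
    intro f ts i hi
    refine Relation.TransGen.tail (ih i hi) ?_
    have : RStep R (Tm.node f (Function.update ts i _)) (Tm.node f (Function.update (Function.update ts i _) i _)) :=
      RStep.congr (ts := Function.update ts i _) (i := i) (by rw [Function.update_self]; exact h2)
    rwa [Function.update_idem] at this

end Aux2
section Aux3

variable {F : Type} {ar : F → ℕ} {Q X : Type}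

open Automaton

lemma main_step [Nonempty Q] {A : Automaton F ar Q} {R : TRS F ar X}
    (hll : LeftLinear R)
    (hcrit : ∀ p ∈ R, ∀ (α : X → Q) (q : Q),
        A.Steps (p.1.subst (fun x => .var (α x))) (.var q) →
        ∃ t : Tm F ar X, Relation.TransGen (RStep R) p.1 t ∧
          A.Steps (t.subst (fun x => .var (α x))) (.var q))
    (hreach : ∀ q : Q, A.Reachable q) :
    ∀ {g g₁ : GTm F ar}, RStep R g g₁ → ∀ q : Q, A.Steps g.toTm (.var q) →
    ∃ g₂ : GTm F ar, Relation.TransGen (RStep R) g g₂ ∧ A.Steps g₂.toTm (.var q) := by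
  intro g g₁ h
  induction h with
  | base hmem =>
    rename_i l r σ
    intro q hacc
    rw [GTm.toTm_subst] at hacc
    obtain ⟨α, h1, h2⟩ := accept_subst_decomp l (hll _ hmem) _ q hacc
    obtain ⟨t', ht'1, ht'2⟩ := hcrit (l, r) hmem α q h1
    classical
    set σ'' : X → GTm F ar := fun x =>
      if x ∈ l.varsList then σ x else (hreach (α x)).choose with hσ''
    have hσeq : l.subst σ = l.subst σ'' := by
      apply Tm.subst_congr_vars
      intro x hx
      simp [hσ'', hx]
    refine ⟨t'.subst σ'', ?_, ?_⟩
    · rw [hσeq]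
      exact Relation.TransGen.lift (Tm.subst σ'') (fun a b hab => RStep.subst_lift hab) _ _ ht'1
    · rw [GTm.toTm_subst]
      refine Relation.ReflTransGen.trans (steps_subst_mono (σ' := fun x => .var (α x)) ?_) ht'2
      intro x _
      by_cases hx : x ∈ l.varsList
      · simp only [hσ'', if_pos hx]
        exact h2 x hx
      · simp only [hσ'', if_neg hx]
        exact (hreach (α x)).choose_spec
  | congr hstep ih =>
    rename_i f ts i t₁
    intro q hacc
    rw [GTm.toTm_node] at hacc
    obtain ⟨qs, hdelta, hsteps⟩ := steps_node_inv hacc rfl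
    obtain ⟨g₂i, hg1, hg2⟩ := ih (qs i) (hsteps i)
    refine ⟨.node f (Function.update ts i g₂i), transGen_rstep_congr hg1 i rfl, ?_⟩
    rw [GTm.toTm_node]
    have heq : (fun j => (GTm.toTm (Function.update ts i g₂i j) : Tm F ar Q))
        = Function.update (fun j => (GTm.toTm (ts j) : Tm F ar Q)) i (GTm.toTm g₂i) := by
      funext j
      by_cases hj : j = i
      · subst hj; rw [Function.update_self, Function.update_self]
      · rw [Function.update_of_ne hj, Function.update_of_ne hj]
    rw [heq]
    refine Relation.ReflTransGen.tail (steps_node (ts' := fun j => .var (qs j)) (fun j => ?_))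
      (Automaton.Step.base hdelta)
    by_cases hj : j = i
    · subst hj; rw [Function.update_self]; exact hg2
    · rw [Function.update_of_ne hj]; exact hsteps j

end Aux3
/-- If all states are reachable, there is a final state, and the signature has a constant,
then some ground term is accepted; and if moreover the weak-closure criterion holds for a
left-linear TRS `R` and `L(A)` contains no `R`-normal forms, then `L(A)` is infinite or
some term of `L(A)` starts an infinite `R`-reduction. -/
theorem accept_and_nontermination {F : Type} {ar : F → ℕ} {Q X : Type}
    (A : Automaton F ar Q) (R : TRS F ar X)
    (hreach : ∀ q : Q, A.Reachable q)
    (hfin : A.final.Nonempty)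
    (hconst : ∃ c : F, ar c = 0) :
    (∃ (t : GTm F ar) (q : Q), q ∈ A.final ∧ A.Steps t.toTm (.var q)) ∧
    (LeftLinear R →
      (∀ p ∈ R, ∀ (α : X → Q) (q : Q),
        A.Steps (p.1.subst (fun x => .var (α x))) (.var q) →
        ∃ t : Tm F ar X, Relation.TransGen (RStep R) p.1 t ∧
          A.Steps (t.subst (fun x => .var (α x))) (.var q)) →
      (∀ t ∈ A.Lang, ¬ IsNF R t) →
      A.Lang.Infinite ∨
        ∃ t ∈ A.Lang, ∃ seq : ℕ → GTm F ar, seq 0 = t ∧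
          ∀ n : ℕ, RStep R (seq n) (seq (n + 1))) := by
  classical
  obtain ⟨q0, hq0⟩ := hfin
  haveI : Nonempty Q := ⟨q0⟩
  obtain ⟨t0, ht0⟩ := hreach q0
  refine ⟨⟨t0, q0, hq0, ht0⟩, ?_⟩
  intro hll hcrit hnf
  right
  have key : ∀ g ∈ A.Lang, ∃ l : List (GTm F ar), l ≠ [] ∧ List.Chain (RStep R) g l ∧
      (g :: l).getLast (List.cons_ne_nil _ _) ∈ A.Lang := by
    intro g hg
    obtain ⟨q, hq, hacc⟩ := hg
    have hn : ¬ IsNF R g := hnf g ⟨q, hq, hacc⟩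
    rw [IsNF] at hn; push_neg at hn
    obtain ⟨g₁, hg₁⟩ := hn
    obtain ⟨g₂, htg, hacc₂⟩ := main_step hll hcrit hreach hg₁ q hacc
    obtain ⟨x, hx1, hx2⟩ := Relation.TransGen.head'_iff.mp htg
    obtain ⟨l, hch, hlast⟩ := List.exists_isChain_cons_of_relationReflTransGen hx2
    refine ⟨x :: l, List.cons_ne_nil _ _, List.chain_cons.mpr ⟨hx1, hch⟩, ?_⟩
    rw [List.getLast_cons (List.cons_ne_nil _ _), hlast]
    exact ⟨q, hq, hacc₂⟩
  have hstep_all : ∀ p : {p : GTm F ar × List (GTm F ar) //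
      p.2 ≠ [] ∧ List.Chain (RStep R) p.1 p.2 ∧
      (p.1 :: p.2).getLast (List.cons_ne_nil _ _) ∈ A.Lang},
      ∃ p' : {p : GTm F ar × List (GTm F ar) //
      p.2 ≠ [] ∧ List.Chain (RStep R) p.1 p.2 ∧
      (p.1 :: p.2).getLast (List.cons_ne_nil _ _) ∈ A.Lang},
      RStep R p.1.1 p'.1.1 := by
    rintro ⟨⟨g, l⟩, hne, hch, hl⟩
    obtain ⟨x, l', rfl⟩ : ∃ x l', l = x :: l' := by
      cases l with
      | nil => exact absurd rfl hne
      | cons a b => exact ⟨a, b, rfl⟩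
    have hgx : RStep R g x := (List.chain_cons.mp hch).1
    cases l' with
    | nil =>
      have hx : x ∈ A.Lang := by simpa using hl
      obtain ⟨l'', hne'', hch'', hl''⟩ := key x hx
      exact ⟨⟨(x, l''), hne'', hch'', hl''⟩, hgx⟩
    | cons y l'' =>
      refine ⟨⟨(x, y :: l''), List.cons_ne_nil _ _, (List.chain_cons.mp hch).2, ?_⟩, hgx⟩
      rwa [List.getLast_cons (List.cons_ne_nil _ _)] at hl
  choose nxt hnxt using hstep_all
  obtain ⟨l0, hne0, hch0, hl0⟩ := key t0 ⟨q0, hq0, ht0⟩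
  refine ⟨t0, ⟨q0, hq0, ht0⟩, fun n => ((nxt^[n] ⟨(t0, l0), hne0, hch0, hl0⟩).1.1), rfl,
    fun n => ?_⟩
  simp only [Function.iterate_succ_apply']
  exact hnxt _
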